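/- Let d_r > 0, d_f > 0 and define f : S → P*(S) (the bounded delay model) by f(u) = {x ∈ S : for all t ∈ ℝ, min_{ξ ∈ [t−d_r, t)} u(ξ) ≤ x(t) ≤ max_{ξ ∈ [t−d_f, t)} u(ξ)}. Then f(u) is nonempty for every u ∈ S, and f satisfies condition (iv) with parameter d = max(d_r, d_f): for all t ∈ ℝ and u, v ∈ S, if u = v on [t−max(d_r, d_f), t), then {x(t) : x ∈ f(u)} = {y(t) : y ∈ f(v)}; moreover f satisfies condition (v): for all t ∈ ℝ and u, v ∈ S, if u = v on (−∞, t], then {x restricted to (−∞, t] : x ∈ f(u)} = {y restricted to (−∞, t] : y ∈ f(v)}. -/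

import Mathlib

open Set
open scoped Classical

/-- `B^n`, the set of binary vectors of length `n`. -/
abbrev BV (n : ℕ) := Fin n → Bool

/-- `x : ℝ → α` is a signal: it has an initial value and a strictly increasing,
unbounded-from-above sequence of time instants on whose half-open intervals it is constant. -/
def IsSignal {α : Type*} (x : ℝ → α) : Prop :=
  ∃ (a : α) (t : ℕ → ℝ), StrictMono t ∧ (∀ M : ℝ, ∃ k, M < t k) ∧
    (∀ s, s < t 0 → x s = a) ∧
    (∀ k : ℕ, ∀ s, t k ≤ s → s < t (k + 1) → x s = x (t k))

/-- The set of signals with values in `α`. -/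
def Sig (α : Type*) : Set (ℝ → α) := {x | IsSignal x}

/-- The left limit `x(t-0)`: the common value of `x` on `(t-ε, t)` for small `ε > 0`
(junk value `x t` if no such common value exists). -/
noncomputable def leftLim {α : Type*} (x : ℝ → α) (t : ℝ) : α :=
  if h : ∃ v, ∃ ε, 0 < ε ∧ ∀ s, t - ε < s → s < t → x s = v then h.choose else x t

/-- A constant signal. -/
def IsConstantSig {α : Type*} (x : ℝ → α) : Prop := ∀ s t : ℝ, x s = x t

/-- The first switch time `min {t | x(t-0) ≠ x(t)}` (for a variable signal the
infimum is attained, so it is the minimum). -/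
noncomputable def firstSwitch {α : Type*} (x : ℝ → α) : ℝ :=
  sInf {t | leftLim x t ≠ x t}

/-- Non-anticipation in the first sense: every state is constant, or the input and the
state are both variable and the first input switch is prior to the first state switch. -/
def NonAnticip1 {α β : Type*} (U : Set (ℝ → α)) (f : (ℝ → α) → Set (ℝ → β)) : Prop :=
  ∀ u ∈ U, ∀ x ∈ f u, IsConstantSig x ∨
    (¬ IsConstantSig u ∧ ¬ IsConstantSig x ∧ firstSwitch u ≤ firstSwitch x)

/-- The translation `x ∘ τ^d`, `(x ∘ τ^d)(t) = x(t - d)`. -/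
def tr {α : Type*} (d : ℝ) (x : ℝ → α) : ℝ → α := fun t => x (t - d)

/-- `S₀`: the signals that are constant (equal to their initial value) on `(-∞, 0)`. -/
def Sig0 (α : Type*) : Set (ℝ → α) :=
  {u | IsSignal u ∧ ∀ s, s < (0:ℝ) → ∀ t', t' < (0:ℝ) → u s = u t'}

/-- Time invariance of the system `f` with input set `U`. -/
def TimeInv {α β : Type*} (U : Set (ℝ → α)) (f : (ℝ → α) → Set (ℝ → β)) : Prop :=
  ∀ d : ℝ, ∀ u ∈ U, tr d u ∈ U ∧ ∀ x ∈ f u, tr d x ∈ f (tr d u)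

/-- `f : U → P*(S^(n))` is an asynchronous system: `U` is a nonempty set of signals and
each set of states `f u`, `u ∈ U`, is a nonempty set of signals. -/
def IsSystem {α β : Type*} (U : Set (ℝ → α)) (f : (ℝ → α) → Set (ℝ → β)) : Prop :=
  U.Nonempty ∧ U ⊆ Sig α ∧ ∀ u ∈ U, (f u).Nonempty ∧ f u ⊆ Sig β

/-- Non-anticipation in the second sense: if two inputs coincide on `(-∞, t)`, then the
sets of restrictions of the states to `(-∞, t]` coincide. -/
def NonAnticip2 {α β : Type*} (U : Set (ℝ → α)) (f : (ℝ → α) → Set (ℝ → β)) : Prop :=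
  ∀ t : ℝ, ∀ u ∈ U, ∀ v ∈ U, EqOn u v (Iio t) →
    ((fun x => (Iic t).restrict x) '' f u) = ((fun x => (Iic t).restrict x) '' f v)

open scoped Classical in
/-- The minimum (infimum) in `B` of the values of `u` on `[a, b)`. -/
noncomputable def icoInf (u : ℝ → Bool) (a b : ℝ) : Bool :=
  if ∀ ξ, a ≤ ξ → ξ < b → u ξ = true then true else false

open scoped Classical in
/-- The maximum (supremum) in `B` of the values of `u` on `[a, b)`. -/
noncomputable def icoSup (u : ℝ → Bool) (a b : ℝ) : Bool :=
  if ∃ ξ, a ≤ ξ ∧ ξ < b ∧ u ξ = true then true else false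

lemma isSignal_glue {α : Type*} {x z : ℝ → α} (c : ℝ)
    (hx : IsSignal x) (hz : IsSignal z) :
    IsSignal (fun s => if s < c then x s else z s) := by
  obtain ⟨a, t, tm, tu, t0, tc⟩ := hx
  obtain ⟨a', r, rm, ru, r0, rc⟩ := hz
  have hN : ∃ n, c ≤ t n := by obtain ⟨n, hn⟩ := tu c; exact ⟨n, hn.le⟩
  have hM : ∃ n, c < r n := ru c
  set N := Nat.find hN with hNdef
  set M := Nat.find hM with hMdef
  have hcN : c ≤ t N := Nat.find_spec hN
  have hcM : c < r M := Nat.find_spec hM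
  have htk : ∀ k, k < N → t k < c := fun k hk =>
    lt_of_not_ge (Nat.find_min hN hk)
  have hrk : ∀ k, k < M → r k ≤ c := fun k hk =>
    le_of_not_gt (Nat.find_min hM hk)
  set s : ℕ → ℝ := fun k => if k < N then t k else if k = N then c else r (M + (k - N - 1)) with hsdef
  refine ⟨a, s, ?_, ?_, ?_, ?_⟩
  · apply strictMono_nat_of_lt_succ
    intro k
    rcases lt_trichotomy (k+1) N with h | h | h
    · simp only [hsdef]; rw [if_pos (by omega), if_pos h]; exact tm (by omega)
    · simp only [hsdef]; rw [if_pos (by omega), if_neg (by omega), if_pos h]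
      exact htk k (by omega)
    · rcases eq_or_lt_of_le (Nat.succ_le_of_lt h) with h2 | h2
      · -- k = N
        simp only [hsdef]
        rw [if_neg (by omega), if_pos (by omega), if_neg (by omega), if_neg (by omega)]
        have : M + (k + 1 - N - 1) = M := by omega
        rw [this]; exact hcM
      · -- k > N
        simp only [hsdef]
        rw [if_neg (by omega), if_neg (by omega), if_neg (by omega), if_neg (by omega)]
        exact rm (by omega)
  · intro B
    obtain ⟨n, hn⟩ := ru B
    refine ⟨N + 1 + n, ?_⟩
    simp only [hsdef]
    rw [if_neg (by omega), if_neg (by omega)]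
    have : M + (N + 1 + n - N - 1) = M + n := by omega
    rw [this]
    exact lt_of_lt_of_le hn (rm.monotone (by omega))
  · intro σ hσ
    by_cases h0 : 0 < N
    · have hs0 : s 0 = t 0 := by simp only [hsdef]; rw [if_pos h0]
      rw [hs0] at hσ
      have : σ < c := lt_trans hσ (htk 0 h0)
      simp only [this, if_pos]
      exact t0 σ hσ
    · have hN0 : N = 0 := by omega
      have hs0 : s 0 = c := by simp only [hsdef]; rw [if_neg (by omega), if_pos hN0.symm]
      rw [hs0] at hσ
      simp only [hσ, if_pos]
      exact t0 σ (lt_of_lt_of_le hσ (hN0 ▸ hcN))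
  · intro k σ h1 h2
    rcases lt_trichotomy (k+1) N with h | h | h
    · have hk : k < N := by omega
      have e1 : s k = t k := by simp only [hsdef]; rw [if_pos hk]
      have e2 : s (k+1) = t (k+1) := by simp only [hsdef]; rw [if_pos h]
      rw [e1] at h1 ⊢; rw [e2] at h2
      have hσc : σ < c := lt_trans h2 (htk _ h)
      have htkc : t k < c := htk _ hk
      simp only [hσc, htkc, if_pos]
      exact tc k σ h1 h2
    · have hk : k < N := by omega
      have e1 : s k = t k := by simp only [hsdef]; rw [if_pos hk]
      have e2 : s (k+1) = c := by simp only [hsdef]; rw [if_neg (by omega), if_pos h]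
      rw [e1] at h1 ⊢; rw [e2] at h2
      have htkc : t k < c := htk _ hk
      simp only [h2, htkc, if_pos]
      exact tc k σ h1 (lt_of_lt_of_le h2 (h ▸ hcN))
    · rcases eq_or_lt_of_le (Nat.succ_le_of_lt h) with h2' | h2'
      · -- k = N : interval [c, r M)
        have hkN : k = N := by omega
        have e1 : s k = c := by simp only [hsdef]; rw [if_neg (by omega), if_pos hkN]
        have e2 : s (k+1) = r M := by
          simp only [hsdef]; rw [if_neg (by omega), if_neg (by omega)]
          congr 1; omega
        rw [e1] at h1 ⊢; rw [e2] at h2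
        have hσc : ¬ σ < c := not_lt.mpr h1
        simp only [hσc, lt_irrefl, if_false]
        rcases Nat.eq_zero_or_pos M with hM0 | hM0
        · rw [hM0] at h2
          rw [r0 σ h2, r0 c (hM0 ▸ hcM)]
        · have hrM1 : r (M-1) ≤ c := hrk _ (by omega)
          have hMe : M - 1 + 1 = M := by omega
          have := rc (M-1) σ (le_trans hrM1 h1) (by rw [hMe]; exact h2)
          have h2c := rc (M-1) c hrM1 (by rw [hMe]; exact hcM)
          rw [this, h2c]
      · -- k > N
        have e1 : s k = r (M + (k - N - 1)) := by
          simp only [hsdef]; rw [if_neg (by omega), if_neg (by omega)]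
        have e2 : s (k+1) = r (M + (k - N - 1) + 1) := by
          simp only [hsdef]; rw [if_neg (by omega), if_neg (by omega)]
          congr 1; omega
        rw [e1] at h1 ⊢; rw [e2] at h2
        have hcs : c < r (M + (k - N - 1)) := lt_of_lt_of_le hcM (rm.monotone (by omega))
        have hσc : ¬ σ < c := not_lt.mpr (le_trans hcs.le h1)
        simp only [hσc, not_lt.mpr hcs.le, if_false]
        exact rc _ σ h1 h2

lemma isSignal_const {α : Type*} (b : α) : IsSignal (fun _ : ℝ => b) := by
  refine ⟨b, fun k => (k : ℝ), ?_, ?_, fun _ _ => rfl, fun _ _ _ _ => rfl⟩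
  · exact strictMono_nat_of_lt_succ fun n => by exact_mod_cast Nat.lt_succ_self n
  · intro M; obtain ⟨n, hn⟩ := exists_nat_gt M; exact ⟨n, hn⟩

lemma isSignal_shift {α : Type*} {v : ℝ → α} (m : ℝ) (hv : IsSignal v) :
    IsSignal (fun s => v (s - m)) := by
  obtain ⟨a, t, tm, tu, t0, tc⟩ := hv
  refine ⟨a, fun k => t k + m, fun i j hij => by simpa using tm hij, ?_, ?_, ?_⟩
  · intro M; obtain ⟨k, hk⟩ := tu (M - m); exact ⟨k, show M < t k + m by linarith⟩
  · intro s hs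
    have hs' : s < t 0 + m := hs
    exact t0 (s - m) (by linarith)
  · intro k s h1 h2
    have h1' : t k + m ≤ s := h1
    have h2' : s < t (k + 1) + m := h2
    show v (s - m) = v (t k + m - m)
    rw [show t k + m - m = t k by ring]
    exact tc k (s - m) (by linarith) (by linarith)

lemma signal_right_const {α : Type*} {x : ℝ → α} (hx : IsSignal x) (p : ℝ) :
    ∃ δ > 0, ∀ s, p ≤ s → s < p + δ → x s = x p := by
  obtain ⟨a, t, tm, tu, t0, tc⟩ := hx
  by_cases hp : p < t 0
  · refine ⟨t 0 - p, by linarith, fun s h1 h2 => ?_⟩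
    rw [t0 s (by linarith), t0 p hp]
  · push_neg at hp
    have hex : ∃ k, p < t (k + 1) := by
      obtain ⟨k, hk⟩ := tu p
      match k, hk with
      | 0, hk => exact absurd hk (not_lt.mpr hp)
      | (k+1), hk => exact ⟨k, hk⟩
    set K := Nat.find hex with hKdef
    have hK1 : p < t (K + 1) := Nat.find_spec hex
    have hK0 : t K ≤ p := by
      rcases Nat.eq_zero_or_pos K with h0 | h0
      · rw [h0]; exact hp
      · have := Nat.find_min hex (m := K - 1) (by omega)
        push_neg at this
        have hKe : K - 1 + 1 = K := by omega
        rwa [hKe] at this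
    refine ⟨t (K + 1) - p, by linarith, fun s h1 h2 => ?_⟩
    rw [tc K s (le_trans hK0 h1) (by linarith), tc K p hK0 hK1]

lemma icoInf_le {u : ℝ → Bool} {a b ξ : ℝ} (h1 : a ≤ ξ) (h2 : ξ < b) :
    icoInf u a b ≤ u ξ := by
  unfold icoInf
  split_ifs with h
  · rw [h ξ h1 h2]
  · exact Bool.false_le _

lemma le_icoSup {u : ℝ → Bool} {a b ξ : ℝ} (h1 : a ≤ ξ) (h2 : ξ < b) :
    u ξ ≤ icoSup u a b := by
  unfold icoSup
  split_ifs with h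
  · exact Bool.le_true _
  · cases hu : u ξ
    · exact le_refl _
    · exact absurd ⟨ξ, h1, h2, hu⟩ h

lemma icoInf_eq_false_iff (u : ℝ → Bool) (a b : ℝ) :
    icoInf u a b = false ↔ ∃ ξ, a ≤ ξ ∧ ξ < b ∧ u ξ = false := by
  unfold icoInf
  split_ifs with h
  · constructor
    · intro hh; exact absurd hh (by simp)
    · rintro ⟨ξ, h1, h2, h3⟩; rw [h ξ h1 h2] at h3; exact absurd h3 (by simp)
  · push_neg at h
    obtain ⟨ξ, h1, h2, h3⟩ := h
    exact ⟨fun _ => ⟨ξ, h1, h2, by simpa using h3⟩, fun _ => rfl⟩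

lemma icoSup_eq_true_iff (u : ℝ → Bool) (a b : ℝ) :
    icoSup u a b = true ↔ ∃ ξ, a ≤ ξ ∧ ξ < b ∧ u ξ = true := by
  unfold icoSup
  split_ifs with h
  · exact ⟨fun _ => h, fun _ => rfl⟩
  · exact ⟨fun hh => absurd hh (by simp), fun hh => absurd hh h⟩

lemma icoInf_congr {u v : ℝ → Bool} {a b : ℝ}
    (h : ∀ ξ, a ≤ ξ → ξ < b → u ξ = v ξ) : icoInf u a b = icoInf v a b := by
  unfold icoInf
  refine if_congr ⟨fun hh ξ h1 h2 => ?_, fun hh ξ h1 h2 => ?_⟩ rfl rfl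
  · rw [← h ξ h1 h2]; exact hh ξ h1 h2
  · rw [h ξ h1 h2]; exact hh ξ h1 h2

lemma icoSup_congr {u v : ℝ → Bool} {a b : ℝ}
    (h : ∀ ξ, a ≤ ξ → ξ < b → u ξ = v ξ) : icoSup u a b = icoSup v a b := by
  unfold icoSup
  refine if_congr ⟨fun ⟨ξ, h1, h2, h3⟩ => ⟨ξ, h1, h2, by rw [← h ξ h1 h2]; exact h3⟩,
                   fun ⟨ξ, h1, h2, h3⟩ => ⟨ξ, h1, h2, by rw [h ξ h1 h2]; exact h3⟩⟩ rfl rfl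

lemma window_push {v : ℝ → Bool} {d δ t s : ℝ} (hd : 0 < d) (b : Bool)
    (hconst : ∀ σ, t - d ≤ σ → σ < t - d + δ → v σ = v (t - d))
    (hex : ∃ ξ, t - d ≤ ξ ∧ ξ < t ∧ v ξ = b) (hts : t ≤ s) (hs : s < t + δ) :
    ∃ ξ, s - d ≤ ξ ∧ ξ < s ∧ v ξ = b := by
  obtain ⟨ξ, h1, h2, h3⟩ := hex
  by_cases hc : s - d ≤ ξ
  · exact ⟨ξ, hc, lt_of_lt_of_le h2 hts, h3⟩
  · push_neg at hc
    refine ⟨s - d, le_refl _, by linarith, ?_⟩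
    rw [hconst (s-d) (by linarith) (by linarith), ← hconst ξ h1 (by linarith), h3]

lemma existsState {dr df : ℝ} (hdr : 0 < dr) (hdf : 0 < df)
    {v : ℝ → Bool} (hv : IsSignal v) (t : ℝ) (b : Bool)
    (h1 : icoInf v (t - dr) t ≤ b) (h2 : b ≤ icoSup v (t - df) t) :
    ∃ x : ℝ → Bool, IsSignal x ∧
      (∀ s, icoInf v (s - dr) s ≤ x s ∧ x s ≤ icoSup v (s - df) s) ∧ x t = b := by
  set m := min dr df with hm
  have hm0 : 0 < m := lt_min hdr hdf
  have hmdr : m ≤ dr := min_le_left _ _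
  have hmdf : m ≤ df := min_le_right _ _
  obtain ⟨δ1, hδ1, hc1⟩ := signal_right_const hv (t - dr)
  obtain ⟨δ2, hδ2, hc2⟩ := signal_right_const hv (t - df)
  set δ := min δ1 δ2 with hδdef
  have hδ0 : 0 < δ := lt_min hδ1 hδ2
  set w : ℝ → Bool := fun s => if s < t + δ then b else v (s - m) with hwdef
  set x : ℝ → Bool := fun s => if s < t then v (s - m) else w s with hxdef
  have hxs : IsSignal x :=
    isSignal_glue t (isSignal_shift m hv) (isSignal_glue (t + δ) (isSignal_const b) (isSignal_shift m hv))
  have hx1 : ∀ s, s < t → x s = v (s - m) := fun s hs => by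
    simp only [hxdef]; rw [if_pos hs]
  have hx2 : ∀ s, t ≤ s → s < t + δ → x s = b := fun s hs1 hs2 => by
    simp only [hxdef, hwdef]; rw [if_neg (not_lt.mpr hs1), if_pos hs2]
  have hx3 : ∀ s, t + δ ≤ s → x s = v (s - m) := fun s hs => by
    simp only [hxdef, hwdef]
    rw [if_neg (by linarith : ¬ s < t), if_neg (not_lt.mpr hs)]
  have base : ∀ s, icoInf v (s - dr) s ≤ v (s - m) ∧ v (s - m) ≤ icoSup v (s - df) s :=
    fun s => ⟨icoInf_le (by linarith) (by linarith), le_icoSup (by linarith) (by linarith)⟩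
  refine ⟨x, hxs, fun s => ?_, hx2 t (le_refl t) (by linarith)⟩
  rcases lt_trichotomy s t with hs | hs | hs
  · rw [hx1 s hs]; exact base s
  · subst hs
    rw [hx2 s (le_refl s) (by linarith)]
    exact ⟨h1, h2⟩
  · by_cases hs2 : s < t + δ
    · rw [hx2 s hs.le hs2]
      constructor
      · cases hb : b
        · rw [hb] at h1
          have hf : icoInf v (t - dr) t = false := le_antisymm h1 (Bool.false_le _)
          have hex := (icoInf_eq_false_iff v (t - dr) t).mp hf
          have hpush := window_push hdr false
            (fun σ hσ1 hσ2 => hc1 σ hσ1 (by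
              have : δ ≤ δ1 := min_le_left _ _
              linarith)) hex hs.le hs2
          rw [(icoInf_eq_false_iff v (s - dr) s).mpr hpush]
        · exact Bool.le_true _
      · cases hb : b
        · exact Bool.false_le _
        · rw [hb] at h2
          have ht' : icoSup v (t - df) t = true := le_antisymm (Bool.le_true _) h2
          have hex := (icoSup_eq_true_iff v (t - df) t).mp ht'
          have hpush := window_push hdf true
            (fun σ hσ1 hσ2 => hc2 σ hσ1 (by
              have : δ ≤ δ2 := min_le_right _ _
              linarith)) hex hs.le hs2
          rw [(icoSup_eq_true_iff v (s - df) s).mpr hpush]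
    · rw [hx3 s (not_lt.mp hs2)]; exact base s

lemma stateExtend {dr df : ℝ} (hdr : 0 < dr) (hdf : 0 < df) (t : ℝ)
    {u v : ℝ → Bool} (hv : IsSignal v) (heq : Set.EqOn u v (Set.Iic t))
    {x : ℝ → Bool} (hx : IsSignal x)
    (hxc : ∀ s, icoInf u (s - dr) s ≤ x s ∧ x s ≤ icoSup u (s - df) s) :
    ∃ y : ℝ → Bool, IsSignal y ∧
      (∀ s, icoInf v (s - dr) s ≤ y s ∧ y s ≤ icoSup v (s - df) s) ∧
      ∀ s, s ≤ t → y s = x s := by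
  set m := min dr df with hm
  have hm0 : 0 < m := lt_min hdr hdf
  have hmdr : m ≤ dr := min_le_left _ _
  have hmdf : m ≤ df := min_le_right _ _
  obtain ⟨δ1, hδ1, hc1⟩ := signal_right_const hv (t - dr)
  obtain ⟨δ2, hδ2, hc2⟩ := signal_right_const hv (t - df)
  obtain ⟨δ3, hδ3, hc3⟩ := signal_right_const hx t
  set δ := min δ1 (min δ2 δ3) with hδdef
  have hδ0 : 0 < δ := lt_min hδ1 (lt_min hδ2 hδ3)
  have hδδ1 : δ ≤ δ1 := min_le_left _ _
  have hδδ2 : δ ≤ δ2 := le_trans (min_le_right _ _) (min_le_left _ _)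
  have hδδ3 : δ ≤ δ3 := le_trans (min_le_right _ _) (min_le_right _ _)
  set y : ℝ → Bool := fun s => if s < t + δ then x s else v (s - m) with hydef
  have hys : IsSignal y := isSignal_glue (t + δ) hx (isSignal_shift m hv)
  have hy1 : ∀ s, s < t + δ → y s = x s := fun s hs => by
    simp only [hydef]; rw [if_pos hs]
  have hy2 : ∀ s, t + δ ≤ s → y s = v (s - m) := fun s hs => by
    simp only [hydef]; rw [if_neg (not_lt.mpr hs)]
  refine ⟨y, hys, fun s => ?_, fun s hs => hy1 s (by linarith)⟩
  rcases le_or_gt s t with hs | hs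
  · rw [hy1 s (by linarith)]
    have einf : icoInf v (s - dr) s = icoInf u (s - dr) s :=
      icoInf_congr fun ξ h1 h2 => (heq (le_trans h2.le hs : ξ ≤ t)).symm
    have esup : icoSup v (s - df) s = icoSup u (s - df) s :=
      icoSup_congr fun ξ h1 h2 => (heq (le_trans h2.le hs : ξ ≤ t)).symm
    rw [einf, esup]; exact hxc s
  · by_cases hs2 : s < t + δ
    · rw [hy1 s hs2, hc3 s hs.le (by linarith)]
      constructor
      · cases hb : x t
        · have h1 := (hxc t).1
          rw [hb] at h1
          have hf : icoInf u (t - dr) t = false := le_antisymm h1 (Bool.false_le _)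
          obtain ⟨ξ, hξ1, hξ2, hξ3⟩ := (icoInf_eq_false_iff u (t - dr) t).mp hf
          have hvξ : v ξ = false := by rw [← heq (hξ2.le : ξ ≤ t)]; exact hξ3
          have hpush := window_push hdr false
            (fun σ hσ1 hσ2 => hc1 σ hσ1 (by linarith)) ⟨ξ, hξ1, hξ2, hvξ⟩ hs.le hs2
          rw [(icoInf_eq_false_iff v (s - dr) s).mpr hpush]
        · exact Bool.le_true _
      · cases hb : x t
        · exact Bool.false_le _
        · have h2 := (hxc t).2
          rw [hb] at h2
          have ht' : icoSup u (t - df) t = true := le_antisymm (Bool.le_true _) h2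
          obtain ⟨ξ, hξ1, hξ2, hξ3⟩ := (icoSup_eq_true_iff u (t - df) t).mp ht'
          have hvξ : v ξ = true := by rw [← heq (hξ2.le : ξ ≤ t)]; exact hξ3
          have hpush := window_push hdf true
            (fun σ hσ1 hσ2 => hc2 σ hσ1 (by linarith)) ⟨ξ, hξ1, hξ2, hvξ⟩ hs.le hs2
          rw [(icoSup_eq_true_iff v (s - df) s).mpr hpush]
    · rw [hy2 s (not_lt.mp hs2)]
      exact ⟨icoInf_le (by linarith) (by linarith), le_icoSup (by linarith) (by linarith)⟩

/-- the bounded delay model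
`f(u) = {x | ∀ t, min_{ξ∈[t-d_r,t)} u(ξ) ≤ x(t) ≤ max_{ξ∈[t-d_f,t)} u(ξ)}` has nonempty
sets of states and satisfies conditions (iv) (with `d = max(d_r, d_f)`) and (v). -/
theorem boundedDelay_nonAnticip (dr df : ℝ) (hdr : 0 < dr) (hdf : 0 < df)
    (f : (ℝ → Bool) → Set (ℝ → Bool))
    (hfdef : ∀ u, f u = {x | IsSignal x ∧
        ∀ t : ℝ, icoInf u (t - dr) t ≤ x t ∧ x t ≤ icoSup u (t - df) t}) :
    (∀ u : ℝ → Bool, IsSignal u → (f u).Nonempty) ∧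
    (∀ t : ℝ, ∀ u v : ℝ → Bool, IsSignal u → IsSignal v →
        EqOn u v (Ico (t - max dr df) t) →
        ((fun x => x t) '' f u) = ((fun x => x t) '' f v)) ∧
    (∀ t : ℝ, ∀ u v : ℝ → Bool, IsSignal u → IsSignal v →
        EqOn u v (Iic t) →
        ((fun x : ℝ → Bool => (Iic t).restrict x) '' f u) =
          ((fun x : ℝ → Bool => (Iic t).restrict x) '' f v)) := by
  have hmem : ∀ u x, x ∈ f u ↔ (IsSignal x ∧
      ∀ t : ℝ, icoInf u (t - dr) t ≤ x t ∧ x t ≤ icoSup u (t - df) t) := by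
    intro u x; rw [hfdef u]; exact Iff.rfl
  have hm0 : 0 < min dr df := lt_min hdr hdf
  refine ⟨?_, ?_, ?_⟩
  · -- nonemptiness
    intro u hu
    obtain ⟨x, hxs, hxc, -⟩ := existsState hdr hdf hu 0 (u (0 - min dr df))
      (icoInf_le (show (0:ℝ) - dr ≤ 0 - min dr df by linarith [min_le_left dr df])
        (show (0:ℝ) - min dr df < 0 by linarith [hm0]))
      (le_icoSup (show (0:ℝ) - df ≤ 0 - min dr df by linarith [min_le_right dr df])
        (show (0:ℝ) - min dr df < 0 by linarith [hm0]))
    exact ⟨x, (hmem u x).mpr ⟨hxs, hxc⟩⟩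
  · -- condition (iv)
    intro t u v hu hv heq
    have key : ∀ u v : ℝ → Bool, IsSignal u → IsSignal v →
        Set.EqOn u v (Set.Ico (t - max dr df) t) →
        ((fun x => x t) '' f u) ⊆ ((fun x => x t) '' f v) := by
      intro u v hu hv heq
      rintro b ⟨x, hxf, rfl⟩
      obtain ⟨hxs, hxc⟩ := (hmem u x).mp hxf
      have einf : icoInf u (t - dr) t = icoInf v (t - dr) t :=
        icoInf_congr fun ξ h1 h2 =>
          heq ⟨by have := le_max_left dr df; linarith, h2⟩
      have esup : icoSup u (t - df) t = icoSup v (t - df) t :=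
        icoSup_congr fun ξ h1 h2 =>
          heq ⟨by have := le_max_right dr df; linarith, h2⟩
      obtain ⟨y, hys, hyc, hyt⟩ := existsState hdr hdf hv t (x t)
        (einf ▸ (hxc t).1) (esup ▸ (hxc t).2)
      exact ⟨y, (hmem v y).mpr ⟨hys, hyc⟩, hyt⟩
    exact le_antisymm (key u v hu hv heq) (key v u hv hu heq.symm)
  · -- condition (v)
    intro t u v hu hv heq
    have key : ∀ u v : ℝ → Bool, IsSignal u → IsSignal v →
        Set.EqOn u v (Set.Iic t) →
        ((fun x : ℝ → Bool => (Set.Iic t).restrict x) '' f u) ⊆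
          ((fun x : ℝ → Bool => (Set.Iic t).restrict x) '' f v) := by
      intro u v hu hv heq
      rintro w ⟨x, hxf, rfl⟩
      obtain ⟨hxs, hxc⟩ := (hmem u x).mp hxf
      obtain ⟨y, hys, hyc, hyx⟩ := stateExtend hdr hdf t hv heq hxs hxc
      refine ⟨y, (hmem v y).mpr ⟨hys, hyc⟩, ?_⟩
      funext s
      exact hyx s.1 s.2
    exact le_antisymm (key u v hu hv heq) (key v u hv hu heq.symm)
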